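/- arXiv:2412.18309 — 2 statements merged into one kernel-verified Lean document; each statement's English description precedes it below -/
import Mathlib

section
/- If U₁ block-encodes A₁ and U₂ block-encodes A₂ (with separate ancilla registers), then the product unitary (appropriately arranging ancillas) block-encodes A₁A₂: formally, (⟨0|_{a₁}⟨0|_{a₂}⊗I)(I_{a₂}⊗U₁)(I_{a₁}⊗U₂ with registers swapped)(|0⟩_{a₁}|0⟩_{a₂}⊗I) = A₁A₂. -/
open scoped Matrix.Norms.L2Operator

/-- The product of two block-encodings (acting on separate ancilla registers) is a
block-encoding of the product of the encoded matrices. -/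
theorem block_encoding_product (a₁ a₂ N : ℕ) [NeZero a₁] [NeZero a₂]
    (A₁ A₂ : Matrix (Fin N) (Fin N) ℂ) (hA₁ : ‖A₁‖ ≤ 1) (hA₂ : ‖A₂‖ ≤ 1)
    (U₁ : Matrix (Fin a₁ × Fin N) (Fin a₁ × Fin N) ℂ)
    (U₂ : Matrix (Fin a₂ × Fin N) (Fin a₂ × Fin N) ℂ)
    (hU₁ : U₁ ∈ Matrix.unitaryGroup (Fin a₁ × Fin N) ℂ)
    (hU₂ : U₂ ∈ Matrix.unitaryGroup (Fin a₂ × Fin N) ℂ)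
    (hb₁ : ∀ r c : Fin N, U₁ (0, r) (0, c) = A₁ r c)
    (hb₂ : ∀ r c : Fin N, U₂ (0, r) (0, c) = A₂ r c)
    -- `V₁` acts as `U₁` on the first ancilla and the system, identity on the second ancilla
    (V₁ V₂ : Matrix (Fin a₁ × Fin a₂ × Fin N) (Fin a₁ × Fin a₂ × Fin N) ℂ)
    (hV₁ : ∀ p q, V₁ p q = if p.2.1 = q.2.1 then U₁ (p.1, p.2.2) (q.1, q.2.2) else 0)
    (hV₂ : ∀ p q, V₂ p q = if p.1 = q.1 then U₂ (p.2.1, p.2.2) (q.2.1, q.2.2) else 0) :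
    ∀ r c : Fin N, (V₁ * V₂) (0, 0, r) (0, 0, c) = (A₁ * A₂) r c := by
  intro r c
  simp only [Matrix.mul_apply, hV₁, hV₂]
  rw [Fintype.sum_prod_type]
  rw [Finset.sum_eq_single (0 : Fin a₁)]
  · rw [Fintype.sum_prod_type]
    rw [Finset.sum_eq_single (0 : Fin a₂)]
    · simp [hb₁, hb₂]
    · intro j _ hj; simp [hj.symm]
    · simp
  · intro i _ hi
    apply Finset.sum_eq_zero
    intro x _
    simp [hi]
  · simp
end

section
/- For a convex differentiable function f : ℝⁿ → ℝ with L-Lipschitz gradient and minimizer x*, gradient descent with step size η = 1/L satisfies f(x_T) − f(x*) ≤ L‖x₀ − x*‖²/(2T); hence T = O(1/δ) iterations suffice to get within δ of the minimum value. -/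
open scoped RealInnerProductSpace

section Aux

variable {F : Type*} [NormedAddCommGroup F] [InnerProductSpace ℝ F] [CompleteSpace F]

/-- Derivative of `f` along the line `t ↦ a + t • v`. -/
lemma hasDerivAt_line_aux (f : F → ℝ) (hf : Differentiable ℝ f) (a v : F) (t : ℝ) :
    HasDerivAt (fun s : ℝ => f (a + s • v)) ⟪gradient f (a + t • v), v⟫ t := by
  have hc : HasDerivAt (fun s : ℝ => a + s • v) v t := by
    simpa using ((hasDerivAt_id t).smul_const v).const_add a
  have hF := (hf (a + t • v)).hasFDerivAt.comp_hasDerivAt t hc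
  have hgrad : fderiv ℝ f (a + t • v) v = ⟪gradient f (a + t • v), v⟫ := by
    rw [gradient]
    simp [InnerProductSpace.toDual_apply_apply]
  exact hF.congr_deriv hgrad

/-- First-order condition for convexity. -/
lemma convex_grad_ineq (f : F → ℝ) (hconv : ConvexOn ℝ Set.univ f)
    (hf : Differentiable ℝ f) (a b : F) :
    f a + ⟪gradient f a, b - a⟫ ≤ f b := by
  set g : ℝ → ℝ := fun s => f (a + s • (b - a)) with hg
  have hgconv : ConvexOn ℝ Set.univ g := by
    have := hconv.comp_affineMap (AffineMap.lineMap a b : ℝ →ᵃ[ℝ] F)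
    simp only [Set.preimage_univ] at this
    convert this using 1 <;> first | rfl | skip
    funext s
    simp only [hg, Function.comp_apply, AffineMap.lineMap_apply_module]
    congr 1
    module
  have hd : HasDerivAt g ⟪gradient f a, b - a⟫ 0 := by
    simpa using hasDerivAt_line_aux f hf a (b - a) 0
  have hslope := hgconv.le_slope_of_hasDerivAt (Set.mem_univ 0) (Set.mem_univ 1)
    zero_lt_one hd
  have : slope g 0 1 = f b - f a := by
    simp [slope_def_field, hg]
  rw [this] at hslope
  linarith

/-- Descent lemma (smoothness upper bound). -/
lemma smooth_upper_bound (f : F → ℝ) (hf : Differentiable ℝ f)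
    (L : ℝ) (hL : 0 < L)
    (hLip : ∀ x y, ‖gradient f x - gradient f y‖ ≤ L * ‖x - y‖) (a b : F) :
    f b ≤ f a + ⟪gradient f a, b - a⟫ + L / 2 * ‖b - a‖ ^ 2 := by
  set v : F := b - a with hv
  set g : ℝ → ℝ := fun s => f (a + s • v) with hg
  set g' : ℝ → ℝ := fun s => ⟪gradient f (a + s • v), v⟫ with hg'
  have hgradcont : Continuous (gradient f) := by
    have : LipschitzWith (Real.toNNReal L) (gradient f) :=
      LipschitzWith.of_dist_le_mul fun p q => by
        simpa [dist_eq_norm, Real.coe_toNNReal L hL.le] using hLip p q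
    exact this.continuous
  have hcont : Continuous g' := by
    apply Continuous.inner
    · exact hgradcont.comp (by continuity)
    · exact continuous_const
  have hderiv : ∀ t ∈ Set.uIcc (0:ℝ) 1, HasDerivAt g (g' t) t := fun t _ =>
    hasDerivAt_line_aux f hf a v t
  have hcont2 : Continuous (fun t : ℝ => g' 0 + L * t * ‖v‖ ^ 2) := by fun_prop
  have hint : g 1 - g 0 = ∫ t in (0:ℝ)..1, g' t :=
    (intervalIntegral.integral_eq_sub_of_hasDerivAt hderiv
      (hcont.intervalIntegrable 0 1)).symm
  have hbound : ∫ t in (0:ℝ)..1, g' t ≤ ∫ t in (0:ℝ)..1, (g' 0 + L * t * ‖v‖ ^ 2) := by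
    apply intervalIntegral.integral_mono_on zero_le_one
      (hcont.intervalIntegrable 0 1)
      (hcont2.intervalIntegrable 0 1)
    intro t ht
    have hdiff : g' t - g' 0 = ⟪gradient f (a + t • v) - gradient f a, v⟫ := by
      simp [hg', inner_sub_left]
    have h1 : ⟪gradient f (a + t • v) - gradient f a, v⟫ ≤
        ‖gradient f (a + t • v) - gradient f a‖ * ‖v‖ := real_inner_le_norm _ _
    have h2 : ‖gradient f (a + t • v) - gradient f a‖ ≤ L * (t * ‖v‖) := by
      have := hLip (a + t • v) a
      simpa [norm_smul, abs_of_nonneg ht.1] using this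
    have h3 : ‖gradient f (a + t • v) - gradient f a‖ * ‖v‖ ≤ L * (t * ‖v‖) * ‖v‖ :=
      mul_le_mul_of_nonneg_right h2 (norm_nonneg _)
    nlinarith [norm_nonneg v, hdiff]
  have hval : ∫ t in (0:ℝ)..1, (g' 0 + L * t * ‖v‖ ^ 2) = g' 0 + L / 2 * ‖v‖ ^ 2 := by
    rw [intervalIntegral.integral_add (intervalIntegrable_const)
      ((by fun_prop : Continuous (fun t : ℝ => L * t * ‖v‖ ^ 2)).intervalIntegrable 0 1)]
    have : ∫ t in (0:ℝ)..1, L * t * ‖v‖ ^ 2 = L / 2 * ‖v‖ ^ 2 := by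
      have : (fun t : ℝ => L * t * ‖v‖ ^ 2) = fun t : ℝ => (L * ‖v‖ ^ 2) * t := by
        funext t; ring
      rw [this, intervalIntegral.integral_const_mul, integral_id]
      ring
    rw [this]
    simp
  have hga : g 0 = f a := by simp [hg]
  have hgb : g 1 = f b := by simp [hg, hv]
  have hg'0 : g' 0 = ⟪gradient f a, v⟫ := by simp [hg']
  have hfinal : f b - f a ≤ g' 0 + L / 2 * ‖v‖ ^ 2 := by
    rw [← hga, ← hgb, hint]
    exact hbound.trans_eq hval
  rw [hg'0] at hfinal
  linarith

end Aux

/-- For a convex differentiable `f` with `L`-Lipschitz gradient and minimizer `x*`,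
gradient descent with step size `1/L` satisfies
`f(x_T) - f(x*) ≤ L‖x₀ - x*‖² / (2T)`. -/
theorem gradient_descent_convex_rate (n : ℕ) (f : EuclideanSpace ℝ (Fin n) → ℝ)
    (hconv : ConvexOn ℝ Set.univ f) (hf : Differentiable ℝ f)
    (L : ℝ) (hL : 0 < L)
    (hLip : ∀ x y, ‖gradient f x - gradient f y‖ ≤ L * ‖x - y‖)
    (xstar : EuclideanSpace ℝ (Fin n)) (hmin : ∀ y, f xstar ≤ f y)
    (x : ℕ → EuclideanSpace ℝ (Fin n))
    (hiter : ∀ t, x (t + 1) = x t - (1 / L) • gradient f (x t)) :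
    ∀ T : ℕ, 0 < T → f (x T) - f xstar ≤ L * ‖x 0 - xstar‖ ^ 2 / (2 * T) := by
  -- per-step descent and distance-decrease estimates
  have hstep : ∀ t, f (x (t + 1)) - f xstar ≤
      L / 2 * (‖x t - xstar‖ ^ 2 - ‖x (t + 1) - xstar‖ ^ 2) ∧
      f (x (t + 1)) ≤ f (x t) := by
    intro t
    set gt : EuclideanSpace ℝ (Fin n) := gradient f (x t) with hgt
    have hxd : x (t + 1) - x t = -((1 / L) • gt) := by
      rw [hiter t]; abel
    have hsm := smooth_upper_bound f hf L hL hLip (x t) (x (t + 1))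
    have hI1 : ⟪gt, x (t + 1) - x t⟫ = -(1 / L) * ‖gt‖ ^ 2 := by
      rw [hxd, inner_neg_right, real_inner_smul_right, real_inner_self_eq_norm_sq]
      ring
    have hN1 : ‖x (t + 1) - x t‖ ^ 2 = (1 / L) ^ 2 * ‖gt‖ ^ 2 := by
      rw [hxd, norm_neg, norm_smul]
      simp [abs_of_pos (by positivity : (0:ℝ) < 1 / L), mul_pow]
    have hLinv : L / 2 * ((1 / L) ^ 2 * ‖gt‖ ^ 2) = 1 / (2 * L) * ‖gt‖ ^ 2 := by
      field_simp
    have hdesc : f (x (t + 1)) ≤ f (x t) - 1 / (2 * L) * ‖gt‖ ^ 2 := by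
      rw [hI1, hN1, hLinv] at hsm
      have : -(1 / L) * ‖gt‖ ^ 2 + 1 / (2 * L) * ‖gt‖ ^ 2 = -(1 / (2 * L) * ‖gt‖ ^ 2) := by
        field_simp; ring
      linarith
    have hconvineq := convex_grad_ineq f hconv hf (x t) xstar
    -- f (x t) + ⟪gt, xstar - x t⟫ ≤ f xstar
    have hcv : f (x t) ≤ f xstar + ⟪gt, x t - xstar⟫ := by
      have : ⟪gt, xstar - x t⟫ = -⟪gt, x t - xstar⟫ := by
        rw [← inner_neg_right]; congr 1; abel
      rw [this] at hconvineq
      linarith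
    -- norm identity
    have hnorm : ‖x (t + 1) - xstar‖ ^ 2 =
        ‖x t - xstar‖ ^ 2 - 2 * (1 / L) * ⟪gt, x t - xstar⟫ + (1 / L) ^ 2 * ‖gt‖ ^ 2 := by
      have hx1 : x (t + 1) - xstar = (x t - xstar) - (1 / L) • gt := by
        rw [hiter t]; abel
      rw [hx1, norm_sub_sq_real, real_inner_smul_right, norm_smul, Real.norm_eq_abs,
        abs_of_pos (by positivity : (0:ℝ) < 1 / L), mul_pow, real_inner_comm]
      ring
    constructor
    · have hG : 0 ≤ ‖gt‖ ^ 2 := by positivity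
      have h2L : 0 < 2 * L := by positivity
      -- from hdesc + hcv : f(x(t+1)) - f* ≤ ⟪gt, r⟫ - ‖gt‖²/(2L)
      have key : f (x (t + 1)) - f xstar ≤ ⟪gt, x t - xstar⟫ - 1 / (2 * L) * ‖gt‖ ^ 2 := by
        linarith
      -- and ⟪gt, r⟫ = L/2 (A - B) + ‖gt‖²/(2L)
      have hid : ⟪gt, x t - xstar⟫ =
          L / 2 * (‖x t - xstar‖ ^ 2 - ‖x (t + 1) - xstar‖ ^ 2) + 1 / (2 * L) * ‖gt‖ ^ 2 := by
        rw [hnorm]; field_simp; ring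
      linarith [key.trans_eq (by linarith [hid] : ⟪gt, x t - xstar⟫ - 1 / (2 * L) * ‖gt‖ ^ 2 =
        L / 2 * (‖x t - xstar‖ ^ 2 - ‖x (t + 1) - xstar‖ ^ 2))]
    · have hG : 0 ≤ ‖gt‖ ^ 2 := by positivity
      have : 0 ≤ 1 / (2 * L) * ‖gt‖ ^ 2 := by positivity
      linarith
  -- monotone decrease
  have hmono : ∀ s u : ℕ, s ≤ u → f (x u) ≤ f (x s) := by
    intro s u hsu
    induction u with
    | zero => simp_all
    | succ k ih =>
      rcases Nat.lt_or_ge s (k + 1) with h | h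
      · exact le_trans (hstep k).2 (ih (Nat.lt_succ_iff.mp h))
      · have : s = k + 1 := le_antisymm hsu h
        simp [this]
  intro T hT
  -- telescoping sum
  have hsum : (∑ t ∈ Finset.range T, (f (x (t + 1)) - f xstar)) ≤
      L / 2 * ‖x 0 - xstar‖ ^ 2 := by
    have h1 : (∑ t ∈ Finset.range T, (f (x (t + 1)) - f xstar)) ≤
        ∑ t ∈ Finset.range T,
          L / 2 * (‖x t - xstar‖ ^ 2 - ‖x (t + 1) - xstar‖ ^ 2) :=
      Finset.sum_le_sum fun t _ => (hstep t).1
    have h2 : ∑ t ∈ Finset.range T,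
        L / 2 * (‖x t - xstar‖ ^ 2 - ‖x (t + 1) - xstar‖ ^ 2) =
        L / 2 * (‖x 0 - xstar‖ ^ 2 - ‖x T - xstar‖ ^ 2) := by
      rw [← Finset.mul_sum, Finset.sum_range_sub' (fun t => ‖x t - xstar‖ ^ 2)]
    have h3 : L / 2 * (‖x 0 - xstar‖ ^ 2 - ‖x T - xstar‖ ^ 2) ≤
        L / 2 * ‖x 0 - xstar‖ ^ 2 := by
      have : 0 ≤ ‖x T - xstar‖ ^ 2 := by positivity
      nlinarith
    linarith
  have hTle : (T : ℝ) * (f (x T) - f xstar) ≤ L / 2 * ‖x 0 - xstar‖ ^ 2 := by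
    have : (T : ℝ) * (f (x T) - f xstar) =
        ∑ t ∈ Finset.range T, (f (x T) - f xstar) := by
      simp [mul_comm]; ring
    rw [this]
    refine le_trans (Finset.sum_le_sum fun t ht => ?_) hsum
    have := hmono (t + 1) T (Finset.mem_range.mp ht)
    linarith
  have hTpos : (0:ℝ) < T := by exact_mod_cast hT
  rw [le_div_iff₀ (by positivity)]
  calc (f (x T) - f xstar) * (2 * T) = 2 * ((T : ℝ) * (f (x T) - f xstar)) := by ring
    _ ≤ 2 * (L / 2 * ‖x 0 - xstar‖ ^ 2) := by linarith
    _ = L * ‖x 0 - xstar‖ ^ 2 := by ring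
end
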